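/- For all n ≥ 1, (∑_{k=0}^{n+1} (k+1)! · C(n+1, k)) / ((n+1)·(n+1)!) = ∑_{k=0}^{n+1} (n+2-k) / ((n+1) · k!) as rational numbers. -/

import Mathlib

theorem stmt10 : ∀ n : ℕ, 1 ≤ n →
    (∑ k ∈ Finset.range (n + 2), (Nat.factorial (k + 1) : ℚ) * (Nat.choose (n + 1) k : ℚ)) /
        (((n : ℚ) + 1) * (Nat.factorial (n + 1) : ℚ)) =
      ∑ k ∈ Finset.range (n + 2), ((n : ℚ) + 2 - (k : ℚ)) /
        (((n : ℚ) + 1) * (Nat.factorial k : ℚ)) := by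
  intro n hn
  rw [Finset.sum_div, ← Finset.sum_range_reflect]
  apply Finset.sum_congr rfl
  intro k hk
  have hk' : k ≤ n + 1 := Nat.lt_succ_iff.mp (Finset.mem_range.mp hk)
  have key : Nat.choose (n+1) (n+1-k) * Nat.factorial (n+1-k)
      * Nat.factorial (n+1-(n+1-k)) = Nat.factorial (n+1) :=
    Nat.choose_mul_factorial_mul_factorial (Nat.sub_le _ _)
  have h2 : n + 1 - (n + 1 - k) = k := by omega
  rw [h2] at key
  have keyQ : (Nat.choose (n+1) (n+1-k) : ℚ) * (Nat.factorial (n+1-k) : ℚ)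
      * (Nat.factorial k : ℚ) = (Nat.factorial (n+1) : ℚ) := by
    exact_mod_cast congrArg (Nat.cast : ℕ → ℚ) key
  have h1 : n + 2 - 1 - k = n + 1 - k := by omega
  rw [h1]
  rw [div_eq_div_iff (by positivity) (by positivity)]
  rw [Nat.factorial_succ]
  push_cast [Nat.cast_sub hk']
  linear_combination ((n:ℚ) + 2 - k) * ((n:ℚ) + 1) * keyQ
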